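/- Let β : ℕ × ℕ → ℝ and let M(2) be the moment matrix of order 2 of β (a 6×6 matrix indexed by the pairs (i,j) with i+j ≤ 2, with entry β(i+k, j+l) at row (i,j) and column (k,l)). Suppose M(2) is positive semidefinite and recursively determined, i.e.: there exist reals a, b, c such that the column of M(2) indexed by (2,0) equals a times the column (0,0) plus b times the column (1,0) plus c times the column (0,1); and there exist reals e0, e1, e2, e3, e4 such that the column indexed by (0,2) equals e0 times column (0,0) plus e1 times column (1,0) plus e2 times column (0,1) plus e3 times column (2,0) plus e4 times column (1,1). Then there exists β' : ℕ × ℕ → ℝ agreeing with β on all pairs (i,j) with i+j ≤ 4 such that the moment matrix M(3) of order 3 of β' (the 10×10 matrix indexed by pairs (i,j) with i+j ≤ 3, with entry β'(i+k, j+l)) is positive semidefinite and rank M(3) = rank M(2). -/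

import Mathlib

open Matrix

/-- The index set of the moment matrix `M(n)`: pairs `(i, j)` with `i + j ≤ n`. -/
def MomentIdx (n : ℕ) := {p : ℕ × ℕ // p.1 + p.2 ≤ n}

instance (n : ℕ) : Fintype (MomentIdx n) :=
  Fintype.subtype ((Finset.range (n + 1) ×ˢ Finset.range (n + 1)).filter
      fun p => p.1 + p.2 ≤ n)
    (by
      intro p
      simp only [Finset.mem_filter, Finset.mem_product, Finset.mem_range]
      omega)

instance (n : ℕ) : DecidableEq (MomentIdx n) := by
  unfold MomentIdx; infer_instance

noncomputable def mext (β : ℕ × ℕ → ℝ) (a b c e0 e1 e2 e3 e4 : ℝ) (i j : ℕ) : ℝ :=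
  if _h4 : i + j ≤ 4 then β (i, j)
  else if _h2 : 2 ≤ i then
    a * mext β a b c e0 e1 e2 e3 e4 (i-2) j + b * mext β a b c e0 e1 e2 e3 e4 (i-1) j
      + c * mext β a b c e0 e1 e2 e3 e4 (i-2) (j+1)
  else
    e0 * mext β a b c e0 e1 e2 e3 e4 i (j-2) + e1 * mext β a b c e0 e1 e2 e3 e4 (i+1) (j-2)
      + e2 * mext β a b c e0 e1 e2 e3 e4 i (j-1) + e3 * mext β a b c e0 e1 e2 e3 e4 (i+2) (j-2)
      + e4 * mext β a b c e0 e1 e2 e3 e4 (i+1) (j-1)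
termination_by 9 * i + 10 * j
decreasing_by all_goals omega

section
variable {β : ℕ × ℕ → ℝ} {a b c e0 e1 e2 e3 e4 : ℝ}

local notation "X" => mext β a b c e0 e1 e2 e3 e4

lemma mext_low {i j : ℕ} (h : i + j ≤ 4) : X i j = β (i, j) := by
  rw [mext, dif_pos h]

variable (hA : ∀ i j, i + j ≤ 2 → β (i+2, j) = a * β (i,j) + b * β (i+1,j) + c * β (i,j+1))
variable (hB : ∀ i j, i + j ≤ 2 → β (i, j+2) =
  e0 * β (i,j) + e1 * β (i+1,j) + e2 * β (i,j+1) + e3 * β (i+2,j) + e4 * β (i+1,j+1))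

include hA in
lemma extA : ∀ i j : ℕ, i + j ≤ 4 → X (i+2) j = a * X i j + b * X (i+1) j + c * X i (j+1) := by
  intro i j h
  by_cases h2 : i + j ≤ 2
  · rw [mext_low (by omega), mext_low (by omega), mext_low (by omega), mext_low (by omega)]
    exact hA i j h2
  · conv_lhs => rw [mext]
    rw [dif_neg (by omega), dif_pos (by omega)]
    simp only [show i+2-2 = i from rfl, show i+2-1 = i+1 from rfl]

include hA hB in
lemma extB : ∀ i j : ℕ, i + j ≤ 4 → X i (j+2) =
    e0 * X i j + e1 * X (i+1) j + e2 * X i (j+1) + e3 * X (i+2) j + e4 * X (i+1) (j+1) := by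
  intro i
  induction i using Nat.strong_induction_on with
  | _ i IH =>
    intro j h
    by_cases h2i : 2 ≤ i
    · obtain ⟨i', rfl⟩ : ∃ i', i = i' + 2 := ⟨i - 2, by omega⟩
      have h1 : X (i'+2) (j+2) = a * X i' (j+2) + b * X (i'+1) (j+2) + c * X i' (j+3) :=
        extA hA i' (j+2) (by omega)
      have h2 : X (i'+2) j = a * X i' j + b * X (i'+1) j + c * X i' (j+1) :=
        extA hA i' j (by omega)
      have h3 : X (i'+3) j = a * X (i'+1) j + b * X (i'+2) j + c * X (i'+1) (j+1) :=
        extA hA (i'+1) j (by omega)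
      have h4 : X (i'+2) (j+1) = a * X i' (j+1) + b * X (i'+1) (j+1) + c * X i' (j+2) :=
        extA hA i' (j+1) (by omega)
      have h5 : X (i'+4) j = a * X (i'+2) j + b * X (i'+3) j + c * X (i'+2) (j+1) :=
        extA hA (i'+2) j (by omega)
      have h6 : X (i'+3) (j+1) = a * X (i'+1) (j+1) + b * X (i'+2) (j+1) + c * X (i'+1) (j+2) :=
        extA hA (i'+1) (j+1) (by omega)
      have g1 := IH i' (by omega) j (by omega)
      have g2 := IH (i'+1) (by omega) j (by omega)
      have g3 := IH i' (by omega) (j+1) (by omega)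
      linear_combination h1 + a * g1 + b * g2 + c * g3 - e0 * h2 - e1 * h3 - e2 * h4
        - e3 * h5 - e4 * h6
    · by_cases h2 : i + j ≤ 2
      · rw [mext_low (by omega), mext_low (by omega), mext_low (by omega), mext_low (by omega),
          mext_low (by omega), mext_low (by omega)]
        exact hB i j h2
      · conv_lhs => rw [mext]
        rw [dif_neg (by omega), dif_neg (by omega)]
        simp only [show j+2-2 = j from rfl, show j+2-1 = j+1 from rfl]
end

def idx2 : Fin 6 → MomentIdx 2
  | 0 => ⟨(0,0), by norm_num⟩
  | 1 => ⟨(1,0), by norm_num⟩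
  | 2 => ⟨(0,1), by norm_num⟩
  | 3 => ⟨(2,0), by norm_num⟩
  | 4 => ⟨(1,1), by norm_num⟩
  | 5 => ⟨(0,2), by norm_num⟩

lemma idx2_bij : Function.Bijective idx2 := by decide

lemma sum_MI2 (f : MomentIdx 2 → ℝ) :
    (∑ r : MomentIdx 2, f r) =
      f ⟨(0,0), by norm_num⟩ + f ⟨(1,0), by norm_num⟩ + f ⟨(0,1), by norm_num⟩
        + f ⟨(2,0), by norm_num⟩ + f ⟨(1,1), by norm_num⟩ + f ⟨(0,2), by norm_num⟩ := by
  rw [← Fintype.sum_bijective idx2 idx2_bij _ f (fun i => rfl), Fin.sum_univ_six]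
  rfl

section
variable {β : ℕ × ℕ → ℝ} {a b c e0 e1 e2 e3 e4 : ℝ}
local notation "X" => mext β a b c e0 e1 e2 e3 e4

/-- coefficient of column `q` of `M(3)` on basis column `r` (deg `r` ≤ 2). -/
noncomputable def wcoef (a b c e0 e1 e2 e3 e4 : ℝ) (q r : ℕ × ℕ) : ℝ :=
  if q.1 + q.2 ≤ 2 then (if r = q then 1 else 0)
  else if q = (3,0) then
    (if r = (1,0) then a else if r = (2,0) then b else if r = (1,1) then c else 0)
  else if q = (2,1) then
    (if r = (0,1) then a else if r = (1,1) then b else if r = (0,2) then c else 0)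
  else if q = (1,2) then
    (if r = (1,0) then e0 + e3*a else if r = (2,0) then e1 + e3*b
      else if r = (1,1) then e2 + e3*c + e4*b else if r = (0,1) then e4*a
      else if r = (0,2) then e4*c else 0)
  else
    (if r = (0,1) then e0 + e3*a + e4*(e4*a)
      else if r = (1,1) then e1 + e3*b + e4*(e2 + e3*c + e4*b)
      else if r = (0,2) then e2 + e3*c + e4*(e4*c)
      else if r = (1,0) then e4*(e0 + e3*a)
      else if r = (2,0) then e4*(e1 + e3*b) else 0)

variable (hA : ∀ i j, i + j ≤ 2 → β (i+2, j) = a * β (i,j) + b * β (i+1,j) + c * β (i,j+1))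
variable (hB : ∀ i j, i + j ≤ 2 → β (i, j+2) =
  e0 * β (i,j) + e1 * β (i+1,j) + e2 * β (i,j+1) + e3 * β (i+2,j) + e4 * β (i+1,j+1))

include hA hB in
lemma key : ∀ x₁ x₂ : ℕ, x₁ + x₂ ≤ 3 → ∀ q : MomentIdx 3,
    X (x₁ + q.1.1) (x₂ + q.1.2) =
      ∑ r : MomentIdx 2, wcoef a b c e0 e1 e2 e3 e4 q.1 r.1 * X (x₁ + r.1.1) (x₂ + r.1.2) := by
  intro x₁ x₂ hx q
  obtain ⟨⟨k, l⟩, hq⟩ := q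
  have hkl : k + l ≤ 3 := hq
  rw [sum_MI2]
  simp only [Subtype.coe_mk]
  have h30 : X (x₁+3) x₂ = a * X (x₁+1) x₂ + b * X (x₁+2) x₂ + c * X (x₁+1) (x₂+1) :=
    extA hA (x₁+1) x₂ (by omega)
  have h21 : X (x₁+2) (x₂+1) = a * X x₁ (x₂+1) + b * X (x₁+1) (x₂+1) + c * X x₁ (x₂+2) :=
    extA hA x₁ (x₂+1) (by omega)
  have hB12 : X (x₁+1) (x₂+2) = e0 * X (x₁+1) x₂ + e1 * X (x₁+2) x₂ + e2 * X (x₁+1) (x₂+1)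
      + e3 * X (x₁+3) x₂ + e4 * X (x₁+2) (x₂+1) :=
    extB hA hB (x₁+1) x₂ (by omega)
  have hB03 : X x₁ (x₂+3) = e0 * X x₁ (x₂+1) + e1 * X (x₁+1) (x₂+1) + e2 * X x₁ (x₂+2)
      + e3 * X (x₁+2) (x₂+1) + e4 * X (x₁+1) (x₂+2) :=
    extB hA hB x₁ (x₂+1) (by omega)
  have hk : k ≤ 3 := by omega
  interval_cases k <;>
    (have hl : l ≤ 3 := by omega) <;> interval_cases l <;>
  first
    | exact absurd hkl (by omega)
    | (norm_num [wcoef, Prod.mk.injEq, -Prod.mk_zero_zero, -Prod.mk_one_one] <;>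
       first
        | rfl
        | linear_combination h30
        | linear_combination h21
        | linear_combination hB12 + e3 * h30 + e4 * h21
        | linear_combination hB03 + e3 * h21 + e4 * hB12 + e4*e3 * h30 + e4*e4 * h21)
end

/-- The moment matrix `M(n)` of a double sequence `β`: the entry at row `(i,j)`
and column `(k,l)` is `β (i+k, j+l)`. -/
def momentMatrix (n : ℕ) (β : ℕ × ℕ → ℝ) : Matrix (MomentIdx n) (MomentIdx n) ℝ :=
  fun p q => β (p.1.1 + q.1.1, p.1.2 + q.1.2)

noncomputable def Vmat (a b c e0 e1 e2 e3 e4 : ℝ) : Matrix (MomentIdx 2) (MomentIdx 3) ℝ :=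
  Matrix.of fun r q => wcoef a b c e0 e1 e2 e3 e4 q.1 r.1

def incl23 (p : MomentIdx 2) : MomentIdx 3 := ⟨p.1, le_trans p.2 (by omega)⟩

def E12 : Matrix (MomentIdx 2) (MomentIdx 3) ℝ :=
  Matrix.of fun p r => if r = incl23 p then 1 else 0

def E21 : Matrix (MomentIdx 3) (MomentIdx 2) ℝ :=
  Matrix.of fun r q => if r = incl23 q then 1 else 0

/-- Lemma 2.5: a positive semidefinite, recursively determined `M(2)` (the column
`X²` is a combination of `1, X, Y` and the column `Y²` is a combination of
`1, X, Y, X², XY`) admits a flat positive semidefinite extension `M(3)`. -/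
theorem recursively_determined_flat_extension (β : ℕ × ℕ → ℝ)
    (hpsd : (momentMatrix 2 β).PosSemidef)
    (hX2 : ∃ a b c : ℝ, ∀ p : MomentIdx 2,
      momentMatrix 2 β p ⟨(2, 0), by omega⟩ =
        a * momentMatrix 2 β p ⟨(0, 0), by omega⟩ +
        b * momentMatrix 2 β p ⟨(1, 0), by omega⟩ +
        c * momentMatrix 2 β p ⟨(0, 1), by omega⟩)
    (hY2 : ∃ e0 e1 e2 e3 e4 : ℝ, ∀ p : MomentIdx 2,
      momentMatrix 2 β p ⟨(0, 2), by omega⟩ =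
        e0 * momentMatrix 2 β p ⟨(0, 0), by omega⟩ +
        e1 * momentMatrix 2 β p ⟨(1, 0), by omega⟩ +
        e2 * momentMatrix 2 β p ⟨(0, 1), by omega⟩ +
        e3 * momentMatrix 2 β p ⟨(2, 0), by omega⟩ +
        e4 * momentMatrix 2 β p ⟨(1, 1), by omega⟩) :
    ∃ β' : ℕ × ℕ → ℝ, (∀ p : ℕ × ℕ, p.1 + p.2 ≤ 4 → β' p = β p) ∧
      (momentMatrix 3 β').PosSemidef ∧
      (momentMatrix 3 β').rank = (momentMatrix 2 β).rank := by
  obtain ⟨a, b, c, hX⟩ := hX2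
  obtain ⟨e0, e1, e2, e3, e4, hY⟩ := hY2
  have hA : ∀ i j, i + j ≤ 2 → β (i+2, j) = a * β (i,j) + b * β (i+1,j) + c * β (i,j+1) := by
    intro i j h
    simpa [momentMatrix] using hX ⟨(i, j), h⟩
  have hB : ∀ i j, i + j ≤ 2 → β (i, j+2) =
      e0 * β (i,j) + e1 * β (i+1,j) + e2 * β (i,j+1) + e3 * β (i+2,j) + e4 * β (i+1,j+1) := by
    intro i j h
    simpa [momentMatrix] using hY ⟨(i, j), h⟩
  set β' : ℕ × ℕ → ℝ := fun p => mext β a b c e0 e1 e2 e3 e4 p.1 p.2 with hβ'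
  set V := Vmat a b c e0 e1 e2 e3 e4 with hV
  have hrow : ∀ (p : MomentIdx 3) (r : MomentIdx 2), (Vᵀ * momentMatrix 2 β) p r
      = mext β a b c e0 e1 e2 e3 e4 (p.1.1 + r.1.1) (p.1.2 + r.1.2) := by
    intro p r
    rw [Matrix.mul_apply]
    have hr := r.2
    have h := key hA hB r.1.1 r.1.2 (by omega) p
    rw [show r.1.1 + p.1.1 = p.1.1 + r.1.1 from by omega,
      show r.1.2 + p.1.2 = p.1.2 + r.1.2 from by omega] at h
    rw [h]
    refine Finset.sum_congr rfl fun s _ => ?_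
    have hs := s.2
    rw [mext_low (by omega)]
    rw [show r.1.1 + s.1.1 = s.1.1 + r.1.1 from by omega,
      show r.1.2 + s.1.2 = s.1.2 + r.1.2 from by omega]
    rfl
  have hmain : momentMatrix 3 β' = Vᵀ * momentMatrix 2 β * V := by
    ext p q
    show mext β a b c e0 e1 e2 e3 e4 (p.1.1 + q.1.1) (p.1.2 + q.1.2) = _
    rw [key hA hB p.1.1 p.1.2 p.2 q, Matrix.mul_apply]
    refine Finset.sum_congr rfl fun r _ => ?_
    rw [hrow p r]
    exact mul_comm _ _
  have hsub : momentMatrix 2 β = E12 * momentMatrix 3 β' * E21 := by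
    ext p q
    rw [Matrix.mul_apply]
    simp only [Matrix.mul_apply, E12, E21, Matrix.of_apply, ite_mul, mul_ite, one_mul, zero_mul,
      mul_one, mul_zero, Finset.sum_ite_eq', Finset.mem_univ, if_true]
    have hp := p.2
    have hq := q.2
    show β (p.1.1 + q.1.1, p.1.2 + q.1.2) = mext β a b c e0 e1 e2 e3 e4 _ _
    have hi : ∀ r : MomentIdx 2, (incl23 r).1 = r.1 := fun _ => rfl
    rw [mext_low (by simp only [hi]; omega)]
    simp [hi]
  refine ⟨β', fun p hp => ?_, ?_, ?_⟩
  · have h := mext_low (β := β) (a := a) (b := b) (c := c) (e0 := e0) (e1 := e1) (e2 := e2)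
      (e3 := e3) (e4 := e4) (i := p.1) (j := p.2) hp
    simpa [hβ'] using h
  · rw [hmain]
    have hVH : Vᴴ = Vᵀ := by
      ext r q
      simp [Matrix.conjTranspose_apply]
    rw [← hVH]
    exact hpsd.conjTranspose_mul_mul_same V
  · refine le_antisymm ?_ ?_
    · rw [hmain]
      exact le_trans (Matrix.rank_mul_le_left _ _) (Matrix.rank_mul_le_right _ _)
    · conv_lhs => rw [hsub]
      exact le_trans (Matrix.rank_mul_le_left _ _) (Matrix.rank_mul_le_right _ _)
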